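/- There exists a constant C_1 > 0 such that for every interval ω ⊆ I with |ω| ≤ D(ω), one has sup_{x, y ∈ ω} |f''(x)/f'(y)| ≤ C_1/D(ω). -/

import Mathlib

open Real MeasureTheory Filter Set Topology

noncomputable section

/-- The interval `I = [-1,1]`. -/
def II : Set ℝ := Set.Icc (-1) 1

/-- Length (Lebesgue measure) of a subset of `ℝ`. -/
def len (A : Set ℝ) : ℝ := (volume A).toReal

/-- `D(ω)`: the distance of the set `ω` from the critical point `0`. -/
def distCrit (ω : Set ℝ) : ℝ := sInf ((fun x : ℝ => |x|) '' ω)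

/-- Points of an order-connected subset of `I` are within `len ω` of each other. -/
lemma abs_sub_le_len {ω : Set ℝ} (hconn : ω.OrdConnected) (hsub : ω ⊆ II)
    {a b : ℝ} (ha : a ∈ ω) (hb : b ∈ ω) : |b - a| ≤ len ω := by
  have h1 : Set.uIcc a b ⊆ ω := hconn.uIcc_subset ha hb
  have h2 : volume (Set.uIcc a b) ≤ volume ω := measure_mono h1
  have h3 : volume ω ≤ volume II := measure_mono hsub
  have hII : volume II = ENNReal.ofReal 2 := by
    simp [II, Real.volume_Icc]; norm_num
  have hfin : volume ω ≠ ⊤ := by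
    refine ne_top_of_le_ne_top ?_ h3
    rw [hII]; exact ENNReal.ofReal_ne_top
  have h4 : volume (Set.uIcc a b) = ENNReal.ofReal (|b - a|) := by
    rw [Set.uIcc, Real.volume_Icc]
    congr 1
    rw [max_sub_min_eq_abs']
    exact (abs_sub_comm a b)
  have := ENNReal.toReal_mono hfin h2
  rw [h4, ENNReal.toReal_ofReal (abs_nonneg _)] at this
  exact this

/-- The derivative of `f` at the critical point `0` is `0` (either `f` is not
differentiable there, or the derivative is forced to vanish). -/
lemma deriv_at_zero (f : ℝ → ℝ) (s ε₀ K₁ : ℝ)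
    (hs : 1 < s) (hε₀ : 0 < ε₀)
    (hsmooth : ContDiffOn ℝ 2 f (II \ {0}))
    (hpos : ∀ x ∈ II \ {0}, 0 < deriv f x)
    (hnear : ∀ x : ℝ, 0 < |x| → |x| < 2 * ε₀ → deriv f x ≤ K₁ * |x| ^ (s - 1)) :
    deriv f 0 = 0 := by
  by_cases hdiff : DifferentiableAt ℝ f 0
  · -- use the right-sided limit of slopes
    set δ : ℝ := min ε₀ (1/2) with hδdef
    have hδ : 0 < δ := lt_min hε₀ (by norm_num)
    have hδε : δ ≤ ε₀ := min_le_left _ _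
    have hδ1 : δ ≤ 1/2 := min_le_right _ _
    have key : ∀ x ∈ Set.Ioo (0:ℝ) δ,
        0 ≤ slope f 0 x ∧ slope f 0 x ≤ K₁ * x ^ (s - 1) := by
      intro x hx
      have hx0 : 0 < x := hx.1
      have hx1 : x < 1 := lt_of_lt_of_le hx.2 (by linarith)
      have hcont : ContinuousOn f (Set.Icc 0 x) := by
        intro z hz
        rcases eq_or_lt_of_le hz.1 with h0 | h0
        · rw [← h0]
          exact hdiff.continuousAt.continuousWithinAt
        · have hz1 : z < 1 := lt_of_le_of_lt hz.2 hx1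
          have hmem : (II \ {0}) ∈ 𝓝 z := by
            have hopen : Set.Ioo (0:ℝ) 1 ∈ 𝓝 z := isOpen_Ioo.mem_nhds ⟨h0, hz1⟩
            refine Filter.mem_of_superset hopen ?_
            intro w hw
            exact ⟨⟨by linarith [hw.1], le_of_lt hw.2⟩, by simp [ne_of_gt hw.1]⟩
          exact ((hsmooth.continuousOn).continuousAt hmem).continuousWithinAt
      have hdiffOn : DifferentiableOn ℝ f (Set.Ioo 0 x) := by
        intro z hz
        have hz1 : z < 1 := by
          have := hz.2; have := hx.2; linarith
        have hmem : (II \ {0}) ∈ 𝓝 z := by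
          have hopen : Set.Ioo (0:ℝ) 1 ∈ 𝓝 z := isOpen_Ioo.mem_nhds ⟨hz.1, hz1⟩
          refine Filter.mem_of_superset hopen ?_
          intro w hw
          exact ⟨⟨by linarith [hw.1], le_of_lt hw.2⟩, by simp [ne_of_gt hw.1]⟩
        have := (hsmooth.differentiableOn (by norm_num)) z
          ⟨⟨by linarith [hz.1], hz1.le⟩, by simp [ne_of_gt hz.1]⟩
        exact (this.differentiableAt hmem).differentiableWithinAt
      obtain ⟨ξ, hξ, hslope⟩ := exists_deriv_eq_slope f hx0 hcont hdiffOn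
      have hξ1 : ξ < 1 := by
        have := hξ.2; have := hx.2; linarith
      have hξII : ξ ∈ II \ {0} := ⟨⟨by linarith [hξ.1], hξ1.le⟩, by simp [ne_of_gt hξ.1]⟩
      have hfpos : 0 < deriv f ξ := hpos ξ hξII
      have habsξ : |ξ| = ξ := abs_of_pos hξ.1
      have hup : deriv f ξ ≤ K₁ * ξ ^ (s - 1) := by
        have h2 : |ξ| < 2 * ε₀ := by
          rw [habsξ]; linarith [hξ.2, hx.2]
        have := hnear ξ (by rw [habsξ]; exact hξ.1) h2
        rwa [habsξ] at this
      have hK₁pos : 0 ≤ K₁ := by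
        nlinarith [Real.rpow_pos_of_pos hξ.1 (s-1), lt_of_lt_of_le hfpos hup]
      have hmono : ξ ^ (s - 1) ≤ x ^ (s - 1) :=
        Real.rpow_le_rpow hξ.1.le hξ.2.le (by linarith)
      have hslope' : slope f 0 x = deriv f ξ := by
        rw [slope_def_field, hslope]
      constructor
      · rw [hslope']; exact hfpos.le
      · rw [hslope']
        calc deriv f ξ ≤ K₁ * ξ ^ (s-1) := hup
          _ ≤ K₁ * x ^ (s-1) := mul_le_mul_of_nonneg_left hmono hK₁pos
    have hIoo : Set.Ioo (0:ℝ) δ ∈ 𝓝[>] (0:ℝ) := Ioo_mem_nhdsGT_of_mem ⟨le_refl _, hδ⟩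
    have h1 : Tendsto (slope f 0) (𝓝[>] (0:ℝ)) (𝓝 (deriv f 0)) := by
      have := hasDerivAt_iff_tendsto_slope.mp hdiff.hasDerivAt
      exact this.mono_left (nhdsWithin_mono 0 (fun w hw => ne_of_gt hw))
    have h2 : Tendsto (slope f 0) (𝓝[>] (0:ℝ)) (𝓝 0) := by
      have hub : Tendsto (fun x : ℝ => K₁ * x ^ (s - 1)) (𝓝[>] (0:ℝ)) (𝓝 0) := by
        have hc : ContinuousAt (fun x : ℝ => x ^ (s - 1)) 0 :=
          Real.continuousAt_rpow_const 0 (s-1) (Or.inr (by linarith))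
        have h0 : (0:ℝ) ^ (s-1) = 0 := Real.zero_rpow (by intro h; linarith [h])
        have htend : Tendsto (fun x : ℝ => K₁ * x ^ (s - 1)) (𝓝[>] (0:ℝ))
            (𝓝 (K₁ * (0:ℝ) ^ (s - 1))) :=
          (hc.tendsto.const_mul K₁).mono_left nhdsWithin_le_nhds
        rw [h0, mul_zero] at htend
        exact htend
      refine tendsto_of_tendsto_of_tendsto_of_le_of_le' tendsto_const_nhds hub ?_ ?_
      · exact Filter.eventually_of_mem hIoo (fun x hx => (key x hx).1)
      · exact Filter.eventually_of_mem hIoo (fun x hx => (key x hx).2)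
    exact tendsto_nhds_unique h1 h2
  · exact deriv_zero_of_not_differentiableAt hdiff

/-- Lemma 2.6: there is `C₁ > 0` such that for every interval `ω ⊆ I` with
`|ω| ≤ D(ω)` one has `sup_{x,y ∈ ω} |f''(x)/f'(y)| ≤ C₁/D(ω)`. -/
theorem second_derivative_ratio_bound
    (f : ℝ → ℝ) (s ε₀ K₁ K₂ K₁' K₂' : ℝ)
    (hs : 1 < s) (hε₀ : 0 < ε₀)
    (hK₂ : 0 < K₂) (hK : K₂ ≤ K₁) (hK₂' : 0 < K₂') (hK' : K₂' ≤ K₁')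
    (hsmooth : ContDiffOn ℝ 2 f (II \ {0}))
    (hpos : ∀ x ∈ II \ {0}, 0 < deriv f x)
    (hnear : ∀ x : ℝ, 0 < |x| → |x| < 2 * ε₀ →
      K₂ * |x| ^ (s - 1) ≤ deriv f x ∧ deriv f x ≤ K₁ * |x| ^ (s - 1) ∧
      K₂' * |x| ^ (s - 2) ≤ |deriv (deriv f) x| ∧
      |deriv (deriv f) x| ≤ K₁' * |x| ^ (s - 2))
    (hfar : ∃ b₁ b₂ b₃ : ℝ, 0 < b₁ ∧
      ∀ x ∈ II \ Set.Ioo (-ε₀) ε₀,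
        b₁ ≤ deriv f x ∧ deriv f x ≤ b₂ ∧ |deriv (deriv f) x| ≤ b₃) :
    ∃ C₁ : ℝ, 0 < C₁ ∧
      ∀ ω : Set ℝ, ω ⊆ II → ω.OrdConnected → ω.Nonempty →
        len ω ≤ distCrit ω →
        ∀ x ∈ ω, ∀ y ∈ ω,
          |deriv (deriv f) x / deriv f y| ≤ C₁ / distCrit ω := by
  obtain ⟨b₁, b₂, b₃, hb₁, hfar'⟩ := hfar
  have hK₁' : 0 < K₁' := lt_of_lt_of_le hK₂' hK'
  set Ca : ℝ := K₁' * ((2:ℝ) ^ (s-2) + 1) / K₂ with hCa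
  have hCapos : 0 < Ca := by
    have : (0:ℝ) < (2:ℝ) ^ (s-2) := Real.rpow_pos_of_pos (by norm_num) _
    positivity
  set C₁ : ℝ := max Ca (b₃ / b₁) + 1 with hC₁
  have hC₁pos : 0 < C₁ := by
    have : Ca ≤ max Ca (b₃/b₁) := le_max_left _ _
    simp only [hC₁]; linarith
  refine ⟨C₁, hC₁pos, ?_⟩
  intro ω hωI hconn hne hlen x hx y hy
  set d : ℝ := distCrit ω with hd
  have himne : ((fun x : ℝ => |x|) '' ω).Nonempty := hne.image _
  have hbdd : BddBelow ((fun x : ℝ => |x|) '' ω) :=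
    ⟨0, by rintro _ ⟨z, hz, rfl⟩; exact abs_nonneg z⟩
  have hd0 : 0 ≤ d := le_csInf himne (by rintro _ ⟨z, hz, rfl⟩; exact abs_nonneg z)
  have hdle : ∀ z ∈ ω, d ≤ |z| := fun z hz => csInf_le hbdd ⟨z, hz, rfl⟩
  have h2d : ∀ z ∈ ω, |z| ≤ 2 * d := by
    intro z hz
    by_contra hcon
    push_neg at hcon
    set ε : ℝ := (|z| - 2*d)/2 with hε
    have hεpos : 0 < ε := by simp only [hε]; linarith
    obtain ⟨_, ⟨w, hw, rfl⟩, hwlt⟩ := Real.lt_sInf_add_pos himne hεpos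
    have h1 : |z| - |w| ≤ |z - w| := by
      have := abs_sub_abs_le_abs_sub z w
      linarith
    have h2 : |z - w| ≤ len ω := abs_sub_le_len hconn hωI hw hz
    have hwd : |w| < d + ε := hwlt
    have hlen' : len ω ≤ d := hlen
    simp only [hε] at hwd
    linarith
  have hd1 : d ≤ 1 := by
    have h1 : d ≤ |x| := hdle x hx
    have h2 : |x| ≤ 1 := by
      have := hωI hx
      simp only [II, Set.mem_Icc] at this
      exact abs_le.mpr this
    linarith
  rcases eq_or_lt_of_le hd0 with hdz | hdpos
  · -- d = 0 : then x = y = 0 and deriv f 0 = 0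
    have hx0 : x = 0 := by
      have h := h2d x hx; rw [← hdz] at h
      have h2 : |x| ≤ 0 := by linarith
      exact abs_nonpos_iff.mp h2
    have hy0 : y = 0 := by
      have h := h2d y hy; rw [← hdz] at h
      have h2 : |y| ≤ 0 := by linarith
      exact abs_nonpos_iff.mp h2
    have hf0 : deriv f 0 = 0 :=
      deriv_at_zero f s ε₀ K₁ hs hε₀ hsmooth hpos
        (fun z h1 h2 => (hnear z h1 h2).2.1)
    rw [hx0, hy0, hf0, div_zero, abs_zero, ← hdz]
    exact le_of_eq (by rw [div_zero])
  · -- d > 0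
    have hxne : x ≠ 0 := by
      intro h
      have h1 := hdle x hx; rw [h] at h1; simp at h1; linarith
    have hyne : y ≠ 0 := by
      intro h
      have h1 := hdle y hy; rw [h] at h1; simp at h1; linarith
    have hxII : x ∈ II \ {0} := ⟨hωI hx, by simp [hxne]⟩
    have hyII : y ∈ II \ {0} := ⟨hωI hy, by simp [hyne]⟩
    have hfy : 0 < deriv f y := hpos y hyII
    have habs : |deriv (deriv f) x / deriv f y| = |deriv (deriv f) x| / deriv f y := by
      rw [abs_div, abs_of_pos hfy]
    rw [habs]
    rcases lt_or_ge d ε₀ with hcase | hcase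
    · -- near the critical point
      have hxlt : |x| < 2 * ε₀ := lt_of_le_of_lt (h2d x hx) (by linarith)
      have hylt : |y| < 2 * ε₀ := lt_of_le_of_lt (h2d y hy) (by linarith)
      have hxpos : 0 < |x| := abs_pos.mpr hxne
      have hypos : 0 < |y| := abs_pos.mpr hyne
      have hnx := hnear x hxpos hxlt
      have hny := hnear y hypos hylt
      -- |x|^(s-2) ≤ (2^(s-2)+1) d^(s-2)
      have hxpow : |x| ^ (s-2) ≤ ((2:ℝ) ^ (s-2) + 1) * d ^ (s-2) := by
        have hdpow : 0 < d ^ (s-2) := Real.rpow_pos_of_pos hdpos _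
        rcases le_or_gt 2 s with hs2 | hs2
        · have h1 : |x| ^ (s-2) ≤ (2*d) ^ (s-2) :=
            Real.rpow_le_rpow (abs_nonneg _) (h2d x hx) (by linarith)
          have h2 : (2*d) ^ (s-2) = (2:ℝ)^(s-2) * d^(s-2) :=
            Real.mul_rpow (by norm_num) hd0
          rw [h2] at h1
          nlinarith
        · have h1 : |x| ^ (s-2) ≤ d ^ (s-2) :=
            Real.rpow_le_rpow_of_nonpos hdpos (hdle x hx) (by linarith)
          have h2 : (0:ℝ) < (2:ℝ)^(s-2) := Real.rpow_pos_of_pos (by norm_num) _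
          nlinarith
      have hypow : d ^ (s-1) ≤ |y| ^ (s-1) :=
        Real.rpow_le_rpow hd0 (hdle y hy) (by linarith)
      have hnum : |deriv (deriv f) x| ≤ K₁' * (((2:ℝ)^(s-2) + 1) * d^(s-2)) := by
        calc |deriv (deriv f) x| ≤ K₁' * |x| ^ (s-2) := hnx.2.2.2
          _ ≤ K₁' * (((2:ℝ)^(s-2)+1) * d^(s-2)) :=
            mul_le_mul_of_nonneg_left hxpow hK₁'.le
      have hden : K₂ * d ^ (s-1) ≤ deriv f y := by
        calc K₂ * d ^ (s-1) ≤ K₂ * |y| ^ (s-1) :=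
            mul_le_mul_of_nonneg_left hypow hK₂.le
          _ ≤ deriv f y := hny.1
      have hdenpos : 0 < K₂ * d ^ (s-1) := by
        have := Real.rpow_pos_of_pos hdpos (s-1); positivity
      have hnumnn : 0 ≤ K₁' * (((2:ℝ)^(s-2) + 1) * d^(s-2)) :=
        le_trans (abs_nonneg _) hnum
      have hchain : |deriv (deriv f) x| / deriv f y ≤
          (K₁' * (((2:ℝ)^(s-2) + 1) * d^(s-2))) / (K₂ * d ^ (s-1)) :=
        div_le_div₀ hnumnn hnum hdenpos hden
      have heq : (K₁' * (((2:ℝ)^(s-2) + 1) * d^(s-2))) / (K₂ * d ^ (s-1)) = Ca / d := by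
        have hds : d ^ (s-1) = d ^ (s-2) * d := by
          rw [show s - 1 = (s-2) + 1 by ring, Real.rpow_add_one (ne_of_gt hdpos)]
        rw [hds, hCa]
        have hdp : d ^ (s-2) ≠ 0 := ne_of_gt (Real.rpow_pos_of_pos hdpos _)
        field_simp
      rw [heq] at hchain
      refine le_trans hchain ?_
      have hle : Ca ≤ C₁ := by
        have : Ca ≤ max Ca (b₃/b₁) := le_max_left _ _
        simp only [hC₁]; linarith
      gcongr
    · -- far from the critical point
      have hmemx : x ∈ II \ Set.Ioo (-ε₀) ε₀ := by
        refine ⟨hωI hx, ?_⟩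
        intro hmem
        have : |x| < ε₀ := abs_lt.mpr ⟨hmem.1, hmem.2⟩
        have := hdle x hx
        linarith
      have hmemy : y ∈ II \ Set.Ioo (-ε₀) ε₀ := by
        refine ⟨hωI hy, ?_⟩
        intro hmem
        have : |y| < ε₀ := abs_lt.mpr ⟨hmem.1, hmem.2⟩
        have := hdle y hy
        linarith
      have hfx := (hfar' x hmemx).2.2
      have hfy' := (hfar' y hmemy).1
      have hb₃ : 0 ≤ b₃ := le_trans (abs_nonneg _) hfx
      have hchain : |deriv (deriv f) x| / deriv f y ≤ b₃ / b₁ :=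
        div_le_div₀ hb₃ hfx hb₁ hfy'
      refine le_trans hchain ?_
      have h1 : b₃ / b₁ ≤ C₁ := by
        have : b₃/b₁ ≤ max Ca (b₃/b₁) := le_max_right _ _
        simp only [hC₁]; linarith
      calc b₃ / b₁ ≤ C₁ := h1
        _ = C₁ / 1 := (div_one _).symm
        _ ≤ C₁ / d := div_le_div_of_nonneg_left hC₁pos.le hdpos hd1

end
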